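/- Let φ be a 3CNF formula with n ≥ 4 variables and ε = 1/(2n³). In any ε-Nash equilibrium (x, y) of SV(φ) in which both players' expected payoffs are at least n − 1 − ε, for each player and each pair of complementary literals l, −l ∈ L, one of the two is played with probability at least 1/n − 2ε − 1/n² while the other is played with probability less than 1/n². -/

import Mathlib

open Finset

/-- The probability simplex over a finite strategy set `S`. -/
def simplex (S : Type*) [Fintype S] : Set (S → ℝ) :=
  {x | (∀ i, 0 ≤ x i) ∧ ∑ i, x i = 1}

/-- Expected payoff `Σᵢⱼ xᵢ yⱼ A i j`. -/
def payoff {S : Type*} [Fintype S] (A : S → S → ℝ) (x y : S → ℝ) : ℝ :=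
  ∑ i, ∑ j, x i * y j * A i j

/-- The point mass at pure strategy `s`. -/
def pureStrat {S : Type*} [DecidableEq S] (s : S) : S → ℝ :=
  fun i => if i = s then 1 else 0

/-- Support of a mixed strategy. -/
def supp {S : Type*} (x : S → ℝ) : Set S := {i | 0 < x i}

/-- L1 distance between mixed strategies. -/
def dist1 {S : Type*} [Fintype S] (x y : S → ℝ) : ℝ := ∑ i, |x i - y i|

/-- `(x, y)` is an ε-Nash equilibrium of the bi-matrix game `(R, C)`. -/
def IsEpsNash {S : Type*} [Fintype S] [DecidableEq S]
    (R C : S → S → ℝ) (x y : S → ℝ) (ε : ℝ) : Prop :=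
  x ∈ simplex S ∧ y ∈ simplex S ∧
  (∀ s : S, payoff R (pureStrat s) y ≤ payoff R x y + ε) ∧
  (∀ s : S, payoff C x (pureStrat s) ≤ payoff C x y + ε)

/-- A literal over `n` variables: a variable together with a sign
(`true` = the positive literal, `false` = the negated literal). -/
abbrev Lit (n : ℕ) := Fin n × Bool

/-- Negation of a literal. -/
def negLit {n : ℕ} (l : Lit n) : Lit n := (l.1, !l.2)

/-- A 3CNF formula with `n` variables and `m` clauses; each clause is a set of
exactly 3 literals. -/
structure CNF3 (n m : ℕ) where
  clause : Fin m → Finset (Lit n)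
  card3 : ∀ c, (clause c).card = 3

/-- An assignment `a` satisfies a clause if some literal of the clause is true under `a`. -/
def SatAssign {n m : ℕ} (φ : CNF3 n m) (a : Fin n → Bool) : Prop :=
  ∀ c, ∃ l ∈ φ.clause c, a l.1 = l.2

/-- Satisfiability of a 3CNF formula. -/
def CNF3.Satisfiable {n m : ℕ} (φ : CNF3 n m) : Prop :=
  ∃ a : Fin n → Bool, SatAssign φ a

/-- Strategy set of the game `SV(φ)`: literals, variables, and clauses. -/
abbrev SVStrat (n m : ℕ) := Lit n ⊕ (Fin n ⊕ Fin m)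

/-- The row player's payoff in the game `SV(φ)`. -/
def svU1 {n m : ℕ} (φ : CNF3 n m) : SVStrat n m → SVStrat n m → ℝ
  | Sum.inl a, Sum.inl b => if a = negLit b then (n : ℝ) - 4 else (n : ℝ) - 1
  | Sum.inl _, Sum.inr _ => (n : ℝ) - 4
  | Sum.inr (Sum.inl w), Sum.inl l => if l.1 = w then 0 else (n : ℝ)
  | Sum.inr (Sum.inr c), Sum.inl l => if l ∈ φ.clause c then 0 else (n : ℝ)
  | Sum.inr _, Sum.inr _ => (n : ℝ) - 4

/-- The column player's payoff in the symmetric game `SV(φ)`. -/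
def svU2 {n m : ℕ} (φ : CNF3 n m) (a b : SVStrat n m) : ℝ := svU1 φ b a

-- auxiliary lemmas


lemma negLit_negLit {n : ℕ} (l : Lit n) : negLit (negLit l) = l := by
  simp [negLit]

lemma negLit_ne {n : ℕ} (l : Lit n) : negLit l ≠ l := by
  simp [negLit, Prod.ext_iff]

lemma payoff_eq {S : Type*} [Fintype S] (A : S → S → ℝ) (x y : S → ℝ) :
    payoff A x y = ∑ i, x i * ∑ j, y j * A i j := by
  unfold payoff
  refine Finset.sum_congr rfl fun i _ => ?_
  rw [Finset.mul_sum]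
  exact Finset.sum_congr rfl fun j _ => by ring

lemma payoff_swap {S : Type*} [Fintype S] (A : S → S → ℝ) (x y : S → ℝ) :
    payoff (fun a b => A b a) x y = payoff A y x := by
  unfold payoff
  rw [Finset.sum_comm]
  exact Finset.sum_congr rfl fun j _ => Finset.sum_congr rfl fun i _ => by ring

lemma payoff_pure_left {S : Type*} [Fintype S] [DecidableEq S] (A : S → S → ℝ)
    (s : S) (y : S → ℝ) : payoff A (pureStrat s) y = ∑ j, y j * A s j := by
  rw [payoff_eq]
  simp [pureStrat, ite_mul, Finset.sum_ite_eq']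

lemma payoff_pure_right {S : Type*} [Fintype S] [DecidableEq S] (A : S → S → ℝ)
    (x : S → ℝ) (s : S) : payoff A x (pureStrat s) = ∑ i, x i * A i s := by
  unfold payoff
  refine Finset.sum_congr rfl fun i _ => ?_
  simp [pureStrat, mul_ite, ite_mul, Finset.sum_ite_eq']

lemma svU1_ll {n m : ℕ} (φ : CNF3 n m) (a b : Lit n) :
    svU1 φ (Sum.inl a) (Sum.inl b) = if a = negLit b then (n:ℝ)-4 else (n:ℝ)-1 := rfl
lemma svU1_lr {n m : ℕ} (φ : CNF3 n m) (a : Lit n) (r : Fin n ⊕ Fin m) :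
    svU1 φ (Sum.inl a) (Sum.inr r) = (n:ℝ)-4 := rfl
lemma svU1_vl {n m : ℕ} (φ : CNF3 n m) (w : Fin n) (b : Lit n) :
    svU1 φ (Sum.inr (Sum.inl w)) (Sum.inl b) = if b.1 = w then 0 else (n:ℝ) := rfl
lemma svU1_cl {n m : ℕ} (φ : CNF3 n m) (c : Fin m) (b : Lit n) :
    svU1 φ (Sum.inr (Sum.inr c)) (Sum.inl b) = if b ∈ φ.clause c then 0 else (n:ℝ) := rfl
lemma svU1_rr {n m : ℕ} (φ : CNF3 n m) (r r' : Fin n ⊕ Fin m) :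
    svU1 φ (Sum.inr r) (Sum.inr r') = (n:ℝ)-4 := by
  cases r <;> rfl

lemma rowval_lit {n m : ℕ} (φ : CNF3 n m) (z : SVStrat n m → ℝ) (a : Lit n) :
    ∑ j, z j * svU1 φ (Sum.inl a) j
      = ((n:ℝ)-1) * (∑ b : Lit n, z (Sum.inl b)) - 3 * z (Sum.inl (negLit a))
        + ((n:ℝ)-4) * (∑ r : Fin n ⊕ Fin m, z (Sum.inr r)) := by
  rw [Fintype.sum_sum_type]
  have h1 : ∀ b : Lit n,
      z (Sum.inl b) * svU1 φ (Sum.inl a) (Sum.inl b)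
        = ((n:ℝ)-1) * z (Sum.inl b) - (if b = negLit a then 3 * z (Sum.inl b) else 0) := by
    intro b
    rw [svU1_ll]
    by_cases h : b = negLit a
    · have h' : a = negLit b := by rw [h, negLit_negLit]
      rw [if_pos h', if_pos h]; ring
    · have h' : a ≠ negLit b := fun hh => h (by rw [hh, negLit_negLit])
      rw [if_neg h', if_neg h]; ring
  have h2 : ∀ r : Fin n ⊕ Fin m,
      z (Sum.inr r) * svU1 φ (Sum.inl a) (Sum.inr r) = ((n:ℝ)-4) * z (Sum.inr r) := by
    intro r; rw [svU1_lr]; ring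
  rw [Finset.sum_congr rfl fun b _ => h1 b, Finset.sum_congr rfl fun r _ => h2 r,
    Finset.sum_sub_distrib, ← Finset.mul_sum, ← Finset.mul_sum, Finset.sum_ite_eq']
  simp

lemma rowval_var {n m : ℕ} (φ : CNF3 n m) (z : SVStrat n m → ℝ) (w : Fin n) :
    ∑ j, z j * svU1 φ (Sum.inr (Sum.inl w)) j
      = (n:ℝ) * (∑ b : Lit n, z (Sum.inl b))
        - (n:ℝ) * (z (Sum.inl (w, true)) + z (Sum.inl (w, false)))
        + ((n:ℝ)-4) * (∑ r : Fin n ⊕ Fin m, z (Sum.inr r)) := by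
  rw [Fintype.sum_sum_type]
  have h1 : ∀ b : Lit n,
      z (Sum.inl b) * svU1 φ (Sum.inr (Sum.inl w)) (Sum.inl b)
        = (n:ℝ) * z (Sum.inl b) - (if b.1 = w then (n:ℝ) * z (Sum.inl b) else 0) := by
    intro b
    rw [svU1_vl]
    by_cases h : b.1 = w
    · rw [if_pos h, if_pos h]; ring
    · rw [if_neg h, if_neg h]; ring
  have h2 : ∀ r : Fin n ⊕ Fin m,
      z (Sum.inr r) * svU1 φ (Sum.inr (Sum.inl w)) (Sum.inr r)
        = ((n:ℝ)-4) * z (Sum.inr r) := by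
    intro r; rw [svU1_rr]; ring
  rw [Finset.sum_congr rfl fun b _ => h1 b, Finset.sum_congr rfl fun r _ => h2 r,
    Finset.sum_sub_distrib, ← Finset.mul_sum, ← Finset.mul_sum]
  have h3 : ∑ b : Lit n, (if b.1 = w then (n:ℝ) * z (Sum.inl b) else 0)
      = (n:ℝ) * (z (Sum.inl (w, true)) + z (Sum.inl (w, false))) := by
    rw [Fintype.sum_prod_type]
    have h4 : ∀ v : Fin n, ∑ s : Bool, (if (v, s).1 = w then (n:ℝ) * z (Sum.inl (v, s)) else 0)
        = if v = w then (n:ℝ) * (z (Sum.inl (v, true)) + z (Sum.inl (v, false))) else 0 := by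
      intro v
      by_cases h : v = w
      · subst h; rw [Fintype.sum_bool]; simp; ring
      · simp [h]
    rw [Finset.sum_congr rfl fun v _ => h4 v, Finset.sum_ite_eq']
    simp
  rw [h3]

lemma rowval_clause_le {n m : ℕ} (φ : CNF3 n m) (z : SVStrat n m → ℝ)
    (hz : ∀ j, 0 ≤ z j) (c : Fin m) :
    ∑ j, z j * svU1 φ (Sum.inr (Sum.inr c)) j
      ≤ (n:ℝ) * (∑ b : Lit n, z (Sum.inl b))
        + ((n:ℝ)-4) * (∑ r : Fin n ⊕ Fin m, z (Sum.inr r)) := by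
  rw [Fintype.sum_sum_type]
  have h2 : ∑ r : Fin n ⊕ Fin m, z (Sum.inr r) * svU1 φ (Sum.inr (Sum.inr c)) (Sum.inr r)
      = ((n:ℝ)-4) * (∑ r : Fin n ⊕ Fin m, z (Sum.inr r)) := by
    rw [Finset.mul_sum]
    exact Finset.sum_congr rfl fun r _ => by rw [svU1_rr]; ring
  have h1 : ∑ b : Lit n, z (Sum.inl b) * svU1 φ (Sum.inr (Sum.inr c)) (Sum.inl b)
      ≤ (n:ℝ) * (∑ b : Lit n, z (Sum.inl b)) := by
    rw [Finset.mul_sum]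
    refine Finset.sum_le_sum fun b _ => ?_
    rw [svU1_cl]
    split_ifs with h
    · simp only [mul_zero]
      exact mul_nonneg (by positivity) (hz _)
    · rw [mul_comm]
  linarith

set_option maxHeartbeats 1000000 in
lemma key {n m : ℕ} (hn : 4 ≤ n) (φ : CNF3 n m)
    (ε : ℝ) (hε : ε = 1 / (2 * (n : ℝ) ^ 3))
    (x y : SVStrat n m → ℝ)
    (hNash : IsEpsNash (svU1 φ) (svU2 φ) x y ε)
    (hx : (n : ℝ) - 1 - ε ≤ payoff (svU1 φ) x y)
    (hy : (n : ℝ) - 1 - ε ≤ payoff (svU2 φ) x y) :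
    ∀ l : Lit n,
      (1 / (n : ℝ) - 2 * ε - 1 / (n : ℝ) ^ 2 ≤ y (Sum.inl l) ∧
          y (Sum.inl (negLit l)) < 1 / (n : ℝ) ^ 2) ∨
        (1 / (n : ℝ) - 2 * ε - 1 / (n : ℝ) ^ 2 ≤ y (Sum.inl (negLit l)) ∧
          y (Sum.inl l) < 1 / (n : ℝ) ^ 2) := by
  obtain ⟨⟨hx0, hxsum⟩, ⟨hy0, hysum⟩, hrow, hcol⟩ := hNash
  set N := (n:ℝ) with hNdef
  have hN : (4:ℝ) ≤ N := by rw [hNdef]; exact_mod_cast hn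
  have hN0 : (0:ℝ) < N := by linarith
  have hεpos : 0 < ε := by rw [hε]; positivity
  have hNN : (16:ℝ) ≤ N * N :=
    le_trans (by norm_num) (mul_le_mul hN hN (by norm_num) (le_of_lt hN0))
  have hN3 : (64:ℝ) ≤ N ^ 3 := by
    have h := mul_le_mul hNN hN (by norm_num) (mul_nonneg hN0.le hN0.le)
    calc (64:ℝ) = 16 * 4 := by norm_num
      _ ≤ N * N * N := h
      _ = N ^ 3 := by ring
  have hεsmall : ε ≤ 1 / 128 := by
    rw [hε]
    apply one_div_le_one_div_of_le (by norm_num)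
    linarith only [hN3]
  set XL := ∑ b : Lit n, x (Sum.inl b) with hXL
  set XR := ∑ r : Fin n ⊕ Fin m, x (Sum.inr r) with hXR
  set YL := ∑ b : Lit n, y (Sum.inl b) with hYL
  set YR := ∑ r : Fin n ⊕ Fin m, y (Sum.inr r) with hYR
  have hXsplit : XL + XR = 1 := by rw [hXL, hXR, ← Fintype.sum_sum_type]; exact hxsum
  have hYsplit : YL + YR = 1 := by rw [hYL, hYR, ← Fintype.sum_sum_type]; exact hysum
  have hXL0 : 0 ≤ XL := Finset.sum_nonneg fun b _ => hx0 _
  have hXR0 : 0 ≤ XR := Finset.sum_nonneg fun r _ => hx0 _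
  have hYL0 : 0 ≤ YL := Finset.sum_nonneg fun b _ => hy0 _
  have hYR0 : 0 ≤ YR := Finset.sum_nonneg fun r _ => hy0 _
  set U1 := payoff (svU1 φ) x y with hU1def
  set U2 := payoff (svU2 φ) x y with hU2def
  have hU1 : U1 = ∑ i, x i * ∑ j, y j * svU1 φ i j := payoff_eq _ _ _
  have hU2a : U2 = payoff (svU1 φ) y x := by
    rw [hU2def, show svU2 φ = fun a b => svU1 φ b a from rfl, payoff_swap]
  have hU2 : U2 = ∑ i, y i * ∑ j, x j * svU1 φ i j := by rw [hU2a, payoff_eq]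
  have hrow' : ∀ s, (∑ j, y j * svU1 φ s j) ≤ U1 + ε := fun s => by
    have h := hrow s; rwa [payoff_pure_left] at h
  have hcol' : ∀ s, (∑ j, x j * svU1 φ s j) ≤ U2 + ε := fun s => by
    have h := hcol s
    rw [payoff_pure_right] at h
    exact h
  set T := ∑ a : Lit n, x (Sum.inl a) * y (Sum.inl (negLit a)) with hT
  have hT0 : 0 ≤ T := Finset.sum_nonneg fun a _ => mul_nonneg (hx0 _) (hy0 _)
  -- decomposition of U1
  have hU1lit : ∑ a : Lit n, x (Sum.inl a) * (∑ j, y j * svU1 φ (Sum.inl a) j)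
      = XL * ((N-1)*YL + (N-4)*YR) - 3*T := by
    have h : ∀ a : Lit n, x (Sum.inl a) * (∑ j, y j * svU1 φ (Sum.inl a) j)
        = ((N-1)*YL + (N-4)*YR) * x (Sum.inl a)
          - 3 * (x (Sum.inl a) * y (Sum.inl (negLit a))) := by
      intro a; rw [rowval_lit, ← hYL, ← hYR]; ring
    rw [Finset.sum_congr rfl fun a _ => h a, Finset.sum_sub_distrib, ← Finset.mul_sum,
      ← Finset.mul_sum, ← hXL, ← hT]
    ring
  have hU1rest : ∑ r : Fin n ⊕ Fin m, x (Sum.inr r) * (∑ j, y j * svU1 φ (Sum.inr r) j)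
      ≤ XR * (N*YL + (N-4)*YR) := by
    rw [hXR, Finset.sum_mul]
    refine Finset.sum_le_sum fun r _ => ?_
    have hb : (∑ j, y j * svU1 φ (Sum.inr r) j) ≤ N*YL + (N-4)*YR := by
      cases r with
      | inl w =>
        rw [rowval_var, ← hYL, ← hYR]
        have h3 : 0 ≤ N * (y (Sum.inl (w, true)) + y (Sum.inl (w, false))) :=
          mul_nonneg hN0.le (by linarith only [hy0 (Sum.inl (w, true)), hy0 (Sum.inl (w, false))])
        linarith only [h3]
      | inr c =>
        have h := rowval_clause_le φ y hy0 c
        rw [← hYL, ← hYR] at h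
        exact h
    exact mul_le_mul_of_nonneg_left hb (hx0 _)
  have hU1split : U1 = (∑ a : Lit n, x (Sum.inl a) * (∑ j, y j * svU1 φ (Sum.inl a) j))
      + ∑ r : Fin n ⊕ Fin m, x (Sum.inr r) * (∑ j, y j * svU1 φ (Sum.inr r) j) := by
    rw [hU1, Fintype.sum_sum_type]
  -- decomposition of U2
  have hTswap : ∑ b : Lit n, y (Sum.inl b) * x (Sum.inl (negLit b)) = T := by
    rw [hT]
    refine Fintype.sum_equiv (Function.Involutive.toPerm negLit negLit_negLit) _ _ fun a => ?_
    show _ = x (Sum.inl (negLit a)) * y (Sum.inl (negLit (negLit a)))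
    rw [negLit_negLit]
    ring
  have hU2lit : ∑ b : Lit n, y (Sum.inl b) * (∑ j, x j * svU1 φ (Sum.inl b) j)
      = YL * ((N-1)*XL + (N-4)*XR) - 3*T := by
    have h : ∀ b : Lit n, y (Sum.inl b) * (∑ j, x j * svU1 φ (Sum.inl b) j)
        = ((N-1)*XL + (N-4)*XR) * y (Sum.inl b)
          - 3 * (y (Sum.inl b) * x (Sum.inl (negLit b))) := by
      intro b; rw [rowval_lit, ← hXL, ← hXR]; ring
    rw [Finset.sum_congr rfl fun b _ => h b, Finset.sum_sub_distrib, ← Finset.mul_sum,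
      ← Finset.mul_sum, ← hYL, hTswap]
    ring
  have hU2rest : ∑ r : Fin n ⊕ Fin m, y (Sum.inr r) * (∑ j, x j * svU1 φ (Sum.inr r) j)
      ≤ YR * (N*XL + (N-4)*XR) := by
    rw [hYR, Finset.sum_mul]
    refine Finset.sum_le_sum fun r _ => ?_
    have hb : (∑ j, x j * svU1 φ (Sum.inr r) j) ≤ N*XL + (N-4)*XR := by
      cases r with
      | inl w =>
        rw [rowval_var, ← hXL, ← hXR]
        have h3 : 0 ≤ N * (x (Sum.inl (w, true)) + x (Sum.inl (w, false))) :=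
          mul_nonneg hN0.le (by linarith only [hx0 (Sum.inl (w, true)), hx0 (Sum.inl (w, false))])
        linarith only [h3]
      | inr c =>
        have h := rowval_clause_le φ x hx0 c
        rw [← hXL, ← hXR] at h
        exact h
    exact mul_le_mul_of_nonneg_left hb (hy0 _)
  have hU2split : U2 = (∑ b : Lit n, y (Sum.inl b) * (∑ j, x j * svU1 φ (Sum.inl b) j))
      + ∑ r : Fin n ⊕ Fin m, y (Sum.inr r) * (∑ j, x j * svU1 φ (Sum.inr r) j) := by
    rw [hU2, Fintype.sum_sum_type]
  -- upper bounds on payoffs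
  have hXK : XL * ((N-1)*YL + (N-4)*YR) + XR * ((N-1)*YL + (N-4)*YR)
      = (N-1)*YL + (N-4)*YR := by rw [← add_mul, hXsplit, one_mul]
  have hYK : YL * ((N-1)*XL + (N-4)*XR) + YR * ((N-1)*XL + (N-4)*XR)
      = (N-1)*XL + (N-4)*XR := by rw [← add_mul, hYsplit, one_mul]
  have hR1 : XR * (N*YL + (N-4)*YR) = XR*((N-1)*YL + (N-4)*YR) + XR*YL := by ring
  have hR2 : YR * (N*XL + (N-4)*XR) = YR*((N-1)*XL + (N-4)*XR) + YR*XL := by ring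
  have hU1le : U1 ≤ (N-1)*YL + (N-4)*YR + XR*YL := by
    rw [hU1split, hU1lit]; linarith only [hU1rest, hT0, hXK, hR1]
  have hU2le : U2 ≤ (N-1)*XL + (N-4)*XR + YR*XL := by
    rw [hU2split, hU2lit]; linarith only [hU2rest, hT0, hYK, hR2]
  have hYL' : YL = 1 - YR := by linarith
  have hXL' : XL = 1 - XR := by linarith
  have hP1 : XR * YL = XR - XR * YR := by rw [hYL']; ring
  have hP2 : YR * XL = YR - XR * YR := by rw [hXL']; ring
  have hPRnn : 0 ≤ XR * YR := mul_nonneg hXR0 hYR0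
  have hQ1 : (N-1)*YL + (N-4)*YR = (N-1) - 3*YR := by rw [hYL']; ring
  have hQ2 : (N-1)*XL + (N-4)*XR = (N-1) - 3*XR := by rw [hXL']; ring
  have hE1 : XR + YR ≤ ε := by
    linarith only [hx, hy, hU1le, hU2le, hQ1, hQ2, hP1, hP2, hPRnn]
  have hE2 : 3 * T ≤ 2 * ε := by
    have h1 : U1 ≤ ((N-1)*YL + (N-4)*YR) + XR*YL - 3*T := by
      rw [hU1split, hU1lit]; linarith only [hU1rest, hXK, hR1]
    linarith only [h1, hx, hQ1, hP1, hPRnn, hYR0, hE1]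
  have hE3 : ∀ w : Fin n, 1 - 2*ε ≤ N * (y (Sum.inl (w, true)) + y (Sum.inl (w, false))) := by
    intro w
    have h := hrow' (Sum.inr (Sum.inl w))
    rw [rowval_var, ← hYL, ← hYR] at h
    linarith only [h, hU1le, hP1, hPRnn, hE1, hYL']
  have hE4 : ∀ w : Fin n, 1 - 2*ε ≤ N * (x (Sum.inl (w, true)) + x (Sum.inl (w, false))) := by
    intro w
    have h := hcol' (Sum.inr (Sum.inl w))
    rw [rowval_var, ← hXL, ← hXR] at h
    linarith only [h, hU2le, hP2, hPRnn, hE1, hXL']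
  -- conclusion
  intro l
  have hmin : y (Sum.inl (negLit l)) < 1/N^2 ∨ y (Sum.inl l) < 1/N^2 := by
    by_contra hcon
    push_neg at hcon
    obtain ⟨h1, h2⟩ := hcon
    have hne : l ≠ negLit l := (negLit_ne l).symm
    have hsub : x (Sum.inl l) * y (Sum.inl (negLit l))
        + x (Sum.inl (negLit l)) * y (Sum.inl (negLit (negLit l))) ≤ T := by
      rw [hT]
      have h := Finset.sum_le_sum_of_subset_of_nonneg
        (f := fun a : Lit n => x (Sum.inl a) * y (Sum.inl (negLit a)))
        (Finset.subset_univ ({l, negLit l} : Finset (Lit n)))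
        (fun i _ _ => mul_nonneg (hx0 _) (hy0 _))
      rwa [Finset.sum_pair hne] at h
    rw [negLit_negLit] at hsub
    have hXw := hE4 l.1
    have hxpair : x (Sum.inl (l.1, true)) + x (Sum.inl (l.1, false))
        = x (Sum.inl l) + x (Sum.inl (negLit l)) := by
      obtain ⟨v, b⟩ := l
      cases b <;> simp [negLit] <;> ring
    rw [hxpair] at hXw
    have hb1 : x (Sum.inl l) * (1/N^2) ≤ x (Sum.inl l) * y (Sum.inl (negLit l)) :=
      mul_le_mul_of_nonneg_left h1 (hx0 _)
    have hb2 : x (Sum.inl (negLit l)) * (1/N^2) ≤ x (Sum.inl (negLit l)) * y (Sum.inl l) :=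
      mul_le_mul_of_nonneg_left h2 (hx0 _)
    have hs : (1 - 2*ε)/N ≤ x (Sum.inl l) + x (Sum.inl (negLit l)) := by
      rw [div_le_iff₀ hN0]; linarith only [hXw]
    have h3 : (1 - 2*ε)/N * (1/N^2) ≤ T := by
      calc (1 - 2*ε)/N * (1/N^2)
          ≤ (x (Sum.inl l) + x (Sum.inl (negLit l))) * (1/N^2) :=
            mul_le_mul_of_nonneg_right hs (by positivity)
        _ ≤ T := by linarith only [hb1, hb2, hsub]
    have h4 : (1 - 2*ε)/N * (1/N^2) = (1 - 2*ε) * (1/N^3) := by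
      rw [div_mul_div_comm, mul_one, mul_one_div, show N * N^2 = N^3 from by ring]
    have hu : 1/N^3 = 2*ε := by rw [hε]; field_simp
    rw [h4, hu] at h3
    have hsq : ε * ε ≤ (1/128) * ε := mul_le_mul_of_nonneg_right hεsmall hεpos.le
    linarith only [h3, hE2, hεpos, hsq]
  have hYw := hE3 l.1
  have hypair : y (Sum.inl (l.1, true)) + y (Sum.inl (l.1, false))
      = y (Sum.inl l) + y (Sum.inl (negLit l)) := by
    obtain ⟨v, b⟩ := l
    cases b <;> simp [negLit] <;> ring
  rw [hypair] at hYw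
  have h8 : N * (1/N - 2*ε - 1/N^2) = 1 - 2*ε*N - 1/N := by field_simp
  have h7 : N * (1/N^2) = 1/N := by field_simp
  have hεN' : ε ≤ ε * N := le_mul_of_one_le_right (le_of_lt hεpos) (by linarith)
  rcases hmin with hq | hp
  · left
    refine ⟨?_, hq⟩
    have hq' : N * y (Sum.inl (negLit l)) ≤ 1/N := by
      have h := mul_le_mul_of_nonneg_left (le_of_lt hq) (le_of_lt hN0)
      linarith only [h, h7]
    have h9 : N * (1/N - 2*ε - 1/N^2) ≤ N * y (Sum.inl l) := by
      linarith only [hYw, hq', h8, hεN']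
    exact le_of_mul_le_mul_left h9 hN0
  · right
    refine ⟨?_, hp⟩
    have hp' : N * y (Sum.inl l) ≤ 1/N := by
      have h := mul_le_mul_of_nonneg_left (le_of_lt hp) (le_of_lt hN0)
      linarith only [h, h7]
    have h9 : N * (1/N - 2*ε - 1/N^2) ≤ N * y (Sum.inl (negLit l)) := by
      linarith only [hYw, hp', h8, hεN']
    exact le_of_mul_le_mul_left h9 hN0

theorem stmt15 {n m : ℕ} (hn : 4 ≤ n) (φ : CNF3 n m)
    (ε : ℝ) (hε : ε = 1 / (2 * (n : ℝ) ^ 3))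
    (x y : SVStrat n m → ℝ)
    (hNash : IsEpsNash (svU1 φ) (svU2 φ) x y ε)
    (hx : (n : ℝ) - 1 - ε ≤ payoff (svU1 φ) x y)
    (hy : (n : ℝ) - 1 - ε ≤ payoff (svU2 φ) x y) :
    ∀ l : Lit n,
      ((1 / (n : ℝ) - 2 * ε - 1 / (n : ℝ) ^ 2 ≤ x (Sum.inl l) ∧
          x (Sum.inl (negLit l)) < 1 / (n : ℝ) ^ 2) ∨
        (1 / (n : ℝ) - 2 * ε - 1 / (n : ℝ) ^ 2 ≤ x (Sum.inl (negLit l)) ∧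
          x (Sum.inl l) < 1 / (n : ℝ) ^ 2)) ∧
      ((1 / (n : ℝ) - 2 * ε - 1 / (n : ℝ) ^ 2 ≤ y (Sum.inl l) ∧
          y (Sum.inl (negLit l)) < 1 / (n : ℝ) ^ 2) ∨
        (1 / (n : ℝ) - 2 * ε - 1 / (n : ℝ) ^ 2 ≤ y (Sum.inl (negLit l)) ∧
          y (Sum.inl l) < 1 / (n : ℝ) ^ 2)) := by
  have e1 : payoff (svU2 φ) x y = payoff (svU1 φ) y x := by
    rw [show svU2 φ = fun a b => svU1 φ b a from rfl, payoff_swap]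
  have e2 : payoff (svU1 φ) x y = payoff (svU2 φ) y x := by
    rw [show svU2 φ = fun a b => svU1 φ b a from rfl, payoff_swap]
  have hNash' : IsEpsNash (svU1 φ) (svU2 φ) y x ε := by
    obtain ⟨hxS, hyS, hrow, hcol⟩ := hNash
    refine ⟨hyS, hxS, fun s => ?_, fun s => ?_⟩
    · have h := hcol s
      rw [payoff_pure_right] at h
      rw [payoff_pure_left, ← e1]
      exact h
    · have h := hrow s
      rw [payoff_pure_left] at h
      rw [payoff_pure_right, ← e2]
      exact h
  intro l
  exact ⟨key hn φ ε hε y x hNash' (by rw [← e1]; exact hy) (by rw [← e2]; exact hx) l,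
    key hn φ ε hε x y hNash hx hy l⟩
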